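/- Under the same assumptions, the variance of S_k satisfies var(S_k) = (1/n) var(‖t_{(k)}(x)‖²) + 2(1 − 1/n) ν_k, where x is uniform on M. -/

import Mathlib

open MeasureTheory

open ProbabilityTheory
open scoped ENNReal
set_option linter.unusedSectionVars false
set_option maxHeartbeats 1000000


lemma count_sum (n : ℕ) (a b c : ℝ) :
    ∑ i : Fin n, ∑ j : Fin n, ∑ p : Fin n, ∑ q : Fin n,
      ((if i = j then (1:ℝ) else 0) * (if p = q then 1 else 0) * (if i = p then 1 else 0) * a
       + (if i = j then (1:ℝ) else 0) * (if p = q then 1 else 0) * (1 - if i = p then 1 else 0) * b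
       + ((if i = p then (1:ℝ) else 0) * (if j = q then 1 else 0)
           + (if i = q then 1 else 0) * (if j = p then 1 else 0)) *
           (1 - if i = j then 1 else 0) * c)
    = n * a + (n * ((n:ℝ) - 1)) * b + 2 * (n * ((n:ℝ) - 1)) * c := by
  simp only [mul_ite, ite_mul, mul_one, mul_zero, one_mul, zero_mul, mul_sub, sub_mul,
    add_mul, mul_add, Finset.sum_add_distrib, Finset.sum_sub_distrib,
    Finset.sum_ite_eq, Finset.sum_ite_eq', Finset.mem_univ, if_true,
    Finset.sum_const, Finset.card_univ, Fintype.card_fin, nsmul_eq_mul, smul_eq_mul]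
  have e1 : ∀ d : ℝ, (∑ x : Fin n, ∑ x1 : Fin n, ∑ x2 : Fin n, ∑ x3 : Fin n,
      if x = x2 then if x2 = x3 then if x = x1 then d else 0 else 0 else 0) = n * d := by
    intro d
    have h3 : ∀ x x1 x2 : Fin n, (∑ x3 : Fin n,
        if x = x2 then if x2 = x3 then if x = x1 then d else 0 else 0 else 0)
        = if x = x2 then if x = x1 then d else 0 else 0 := by
      intro x x1 x2
      by_cases h : x = x2 <;> simp [h, Finset.sum_ite_eq]
    simp only [h3]
    have h2 : ∀ x x1 : Fin n, (∑ x2 : Fin n, if x = x2 then if x = x1 then d else 0 else 0)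
        = if x = x1 then d else 0 := by
      intro x x1; simp [Finset.sum_ite_eq]
    simp only [h2]
    simp [Finset.sum_ite_eq, Finset.card_univ, mul_comm]
  have e2 : (∑ x : Fin n, ∑ x1 : Fin n, ∑ x2 : Fin n, ∑ x3 : Fin n,
      if x1 = x2 then if x = x3 then c else 0 else 0) = (n:ℝ)^2 * c := by
    have h3 : ∀ x x1 x2 : Fin n, (∑ x3 : Fin n, if x1 = x2 then if x = x3 then c else 0 else 0)
        = if x1 = x2 then c else 0 := by
      intro x x1 x2
      by_cases h : x1 = x2 <;> simp [h, Finset.sum_ite_eq]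
    simp only [h3]
    simp [Finset.sum_ite_eq, Finset.card_univ]
    ring
  have e3 : (∑ x : Fin n, ∑ x1 : Fin n, ∑ x2 : Fin n, ∑ x3 : Fin n,
      if x = x1 then ((if x1 = x3 then if x = x2 then c else 0 else 0)
        + if x1 = x2 then if x = x3 then c else 0 else 0) else 0) = 2 * n * c := by
    have h3 : ∀ x x1 x2 : Fin n, (∑ x3 : Fin n,
        if x = x1 then ((if x1 = x3 then if x = x2 then c else 0 else 0)
          + if x1 = x2 then if x = x3 then c else 0 else 0) else 0)
        = if x = x1 then ((if x = x2 then c else 0) + (if x1 = x2 then c else 0)) else 0 := by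
      intro x x1 x2
      by_cases h : x = x1 <;> simp [h, Finset.sum_add_distrib, Finset.sum_ite_eq]
    simp only [h3]
    have h2 : ∀ x x1 : Fin n, (∑ x2 : Fin n,
        if x = x1 then ((if x = x2 then c else 0) + (if x1 = x2 then c else 0)) else 0)
        = if x = x1 then 2 * c else 0 := by
      intro x x1
      by_cases h : x = x1 <;> simp [h, Finset.sum_add_distrib, Finset.sum_ite_eq]
      ring
    simp only [h2]
    simp [Finset.sum_ite_eq, Finset.card_univ]
    ring
  rw [e1 a, e1 b, e2, e3]
  ring

namespace SSV

variable {Ω : Type*} [MeasurableSpace Ω] {μ : Measure Ω} [IsProbabilityMeasure μ] {n ν : ℕ}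
  {Y : Fin n → Ω → Fin ν → ℝ}


lemma half_eq : (1:ℝ≥0∞)/2 = 1/4 + 1/4 := by
  rw [ENNReal.div_add_div_same, ENNReal.div_eq_div_iff (by norm_num) (by norm_num) (by norm_num) (by norm_num)]
  norm_num

lemma one_eq : (1:ℝ≥0∞)/1 = 1/2 + 1/2 := by
  rw [ENNReal.div_add_div_same, ENNReal.div_eq_div_iff (by norm_num) (by norm_num) (by norm_num) (by norm_num)]
  norm_num

lemma mem2 (hmem : ∀ i l, MemLp (fun ω => Y i ω l) 4 μ) (i j : Fin n) (l l' : Fin ν) :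
    MemLp (fun ω => Y i ω l * Y j ω l') 2 μ :=
  MemLp.smul (hmem j l') (hmem i l) (hpqr := ⟨by simpa only [one_div] using half_eq.symm⟩)

lemma int2 {f g : Ω → ℝ} (hf : MemLp f 2 μ) (hg : MemLp g 2 μ) :
    Integrable (fun ω => f ω * g ω) μ :=
  memLp_one_iff_integrable.mp (MemLp.smul hg hf)

lemma int4 (hmem : ∀ i l, MemLp (fun ω => Y i ω l) 4 μ) (i j p q : Fin n) (l1 l2 l3 l4 : Fin ν) :
    Integrable (fun ω => Y i ω l1 * Y j ω l2 * (Y p ω l3 * Y q ω l4)) μ :=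
  int2 (mem2 hmem i j l1 l2) (mem2 hmem p q l3 l4)

lemma measY (hmeas : ∀ i, Measurable (Y i)) (i : Fin n) (l : Fin ν) :
    Measurable fun ω => Y i ω l := (measurable_pi_apply l).comp (hmeas i)

lemma exp_phi_zero (hmeas : ∀ i, Measurable (Y i))
    (hindep : ProbabilityTheory.iIndepFun Y μ)
    (hmean : ∀ i l, ∫ ω, Y i ω l ∂μ = 0)
    {a b c : Fin n} (hac : a ≠ c) (hbc : b ≠ c)
    (φ : (Fin ν → ℝ) × (Fin ν → ℝ) → ℝ) (hφ : Measurable φ) (l : Fin ν) :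
    ∫ ω, φ (Y a ω, Y b ω) * Y c ω l ∂μ = 0 := by
  have h := ((hindep.indepFun_prodMk hmeas a b c hac hbc).comp hφ (measurable_pi_apply l))
  have := h.integral_fun_mul_eq_mul_integral
    ((hφ.comp ((hmeas a).prodMk (hmeas b))).aestronglyMeasurable)
    ((measY hmeas c l).aestronglyMeasurable)
  simp only [Function.comp_def] at this
  rw [this, hmean c l, mul_zero]

lemma exp_pair (hmeas : ∀ i, Measurable (Y i))
    (hindep : ProbabilityTheory.iIndepFun Y μ)
    {a b : Fin n} (hab : a ≠ b) (l1 l2 l3 l4 : Fin ν) :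
    ∫ ω, (Y a ω l1 * Y a ω l2) * (Y b ω l3 * Y b ω l4) ∂μ
      = (∫ ω, Y a ω l1 * Y a ω l2 ∂μ) * ∫ ω, Y b ω l3 * Y b ω l4 ∂μ := by
  have h := (hindep.indepFun hab).comp
    (show Measurable fun v : Fin ν → ℝ => v l1 * v l2 from
      (measurable_pi_apply l1).mul (measurable_pi_apply l2))
    (show Measurable fun v : Fin ν → ℝ => v l3 * v l4 from
      (measurable_pi_apply l3).mul (measurable_pi_apply l4))
  exact h.integral_fun_mul_eq_mul_integral
    (((measY hmeas a l1).mul (measY hmeas a l2)).aestronglyMeasurable)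
    (((measY hmeas b l3).mul (measY hmeas b l4)).aestronglyMeasurable)

lemma exp_single_zero (hmeas : ∀ i, Measurable (Y i))
    (hindep : ProbabilityTheory.iIndepFun Y μ)
    (hmean : ∀ i l, ∫ ω, Y i ω l ∂μ = 0)
    {a b : Fin n} (hab : a ≠ b) (l1 l2 : Fin ν) :
    ∫ ω, Y a ω l1 * Y b ω l2 ∂μ = 0 := by
  have h := (hindep.indepFun hab).comp (measurable_pi_apply l1) (measurable_pi_apply l2)
  have key := h.integral_fun_mul_eq_mul_integral ((measY hmeas a l1).aestronglyMeasurable)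
    ((measY hmeas b l2).aestronglyMeasurable)
  simp only [Function.comp_def] at key
  rw [key, hmean a l1, zero_mul]

lemma exp_four_zero (hmeas : ∀ i, Measurable (Y i))
    (hindep : ProbabilityTheory.iIndepFun Y μ)
    (hmean : ∀ i l, ∫ ω, Y i ω l ∂μ = 0)
    {i j p q : Fin n} (hip : i ≠ p) (hiq : i ≠ q) (hjp : j ≠ p) (hjq : j ≠ q) (hij : i ≠ j)
    (l l' : Fin ν) :
    ∫ ω, (Y i ω l * Y j ω l) * (Y p ω l' * Y q ω l') ∂μ = 0 := by
  have h := (hindep.indepFun_prodMk_prodMk hmeas i j p q hip hiq hjp hjq).comp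
    (show Measurable fun v : (Fin ν → ℝ) × (Fin ν → ℝ) => v.1 l * v.2 l from
      ((measurable_pi_apply l).comp measurable_fst).mul ((measurable_pi_apply l).comp measurable_snd))
    (show Measurable fun v : (Fin ν → ℝ) × (Fin ν → ℝ) => v.1 l' * v.2 l' from
      ((measurable_pi_apply l').comp measurable_fst).mul ((measurable_pi_apply l').comp measurable_snd))
  have key := h.integral_fun_mul_eq_mul_integral
    (((measY hmeas i l).mul (measY hmeas j l)).aestronglyMeasurable)
    (((measY hmeas p l').mul (measY hmeas q l')).aestronglyMeasurable)
  simp only [Function.comp_def] at key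
  rw [key, exp_single_zero hmeas hindep hmean hij l l, zero_mul]

/-- The master classification of fourth-moment terms. -/
lemma key_exp (hmeas : ∀ i, Measurable (Y i))
    (hindep : ProbabilityTheory.iIndepFun Y μ)
    (hident : ∀ i j, ProbabilityTheory.IdentDistrib (Y i) (Y j) μ μ)
    (hmean : ∀ i l, ∫ ω, Y i ω l ∂μ = 0)
    (hcov : ∀ i l l', ∫ ω, Y i ω l * Y i ω l' ∂μ = if l = l' then 1 else 0)
    (i0 : Fin n) (i j p q : Fin n) (l l' : Fin ν) :
    ∫ ω, (Y i ω l * Y j ω l) * (Y p ω l' * Y q ω l') ∂μ =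
      (if i = j then (1:ℝ) else 0) * (if p = q then 1 else 0) * (if i = p then 1 else 0) *
          (∫ ω, (Y i0 ω l)^2 * (Y i0 ω l')^2 ∂μ)
        + (if i = j then (1:ℝ) else 0) * (if p = q then 1 else 0) * (1 - if i = p then 1 else 0)
        + ((if i = p then (1:ℝ) else 0) * (if j = q then 1 else 0)
            + (if i = q then 1 else 0) * (if j = p then 1 else 0)) *
            (1 - if i = j then 1 else 0) * (if l = l' then 1 else 0) := by
  by_cases hij : i = j
  · subst hij
    by_cases hpq : p = q
    · subst hpq
      by_cases hip : i = p
      · subst hip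
        have h0 : ∫ ω, (Y i ω l * Y i ω l) * (Y i ω l' * Y i ω l') ∂μ
            = ∫ ω, (Y i0 ω l)^2 * (Y i0 ω l')^2 ∂μ := by
          have hg : Measurable fun v : Fin ν → ℝ => (v l)^2 * (v l')^2 := by fun_prop
          have := ((hident i i0).comp hg).integral_eq
          simp only [Function.comp_def] at this
          calc ∫ ω, (Y i ω l * Y i ω l) * (Y i ω l' * Y i ω l') ∂μ
              = ∫ ω, (Y i ω l)^2 * (Y i ω l')^2 ∂μ := by congr 1; funext ω; ring
            _ = _ := this
        simp [h0]
      · have h1 : ∫ ω, (Y i ω l * Y i ω l) * (Y p ω l' * Y p ω l') ∂μ = 1 := by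
          rw [exp_pair hmeas hindep hip, hcov i l l, hcov p l' l']
          simp
        simp [h1, hip]
    · -- i = j, p ≠ q : zero
      have h0 : ∫ ω, (Y i ω l * Y i ω l) * (Y p ω l' * Y q ω l') ∂μ = 0 := by
        by_cases hpi : p = i
        · subst hpi
          have hq : p ≠ q := hpq
          calc ∫ ω, (Y p ω l * Y p ω l) * (Y p ω l' * Y q ω l') ∂μ
              = ∫ ω, (fun v : (Fin ν → ℝ) × (Fin ν → ℝ) => v.1 l * v.1 l * v.1 l')
                  (Y p ω, Y p ω) * Y q ω l' ∂μ := by congr 1; funext ω; ring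
            _ = 0 := exp_phi_zero hmeas hindep hmean hq hq (fun v : (Fin ν → ℝ) × (Fin ν → ℝ) => v.1 l * v.1 l * v.1 l') (by fun_prop) l'
        · by_cases hqi : q = i
          · subst hqi
            have hp : q ≠ p := fun h => hpq h.symm
            calc ∫ ω, (Y q ω l * Y q ω l) * (Y p ω l' * Y q ω l') ∂μ
                = ∫ ω, (fun v : (Fin ν → ℝ) × (Fin ν → ℝ) => v.1 l * v.1 l * v.1 l')
                    (Y q ω, Y q ω) * Y p ω l' ∂μ := by congr 1; funext ω; ring
              _ = 0 := exp_phi_zero hmeas hindep hmean hp hp (fun v : (Fin ν → ℝ) × (Fin ν → ℝ) => v.1 l * v.1 l * v.1 l') (by fun_prop) l'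
          · have hiq : i ≠ q := fun h => hqi h.symm
            calc ∫ ω, (Y i ω l * Y i ω l) * (Y p ω l' * Y q ω l') ∂μ
                = ∫ ω, (fun v : (Fin ν → ℝ) × (Fin ν → ℝ) => v.1 l * v.1 l * v.2 l')
                    (Y i ω, Y p ω) * Y q ω l' ∂μ := by congr 1; funext ω; ring
              _ = 0 := exp_phi_zero hmeas hindep hmean hiq hpq (fun v : (Fin ν → ℝ) × (Fin ν → ℝ) => v.1 l * v.1 l * v.2 l') (by fun_prop) l'
      simp [h0, hpq]
  · by_cases hpq : p = q
    · subst hpq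
      have h0 : ∫ ω, (Y i ω l * Y j ω l) * (Y p ω l' * Y p ω l') ∂μ = 0 := by
        by_cases hip : i = p
        · subst hip
          have hj : i ≠ j := hij
          calc ∫ ω, (Y i ω l * Y j ω l) * (Y i ω l' * Y i ω l') ∂μ
              = ∫ ω, (fun v : (Fin ν → ℝ) × (Fin ν → ℝ) => v.1 l * v.1 l' * v.1 l')
                  (Y i ω, Y i ω) * Y j ω l ∂μ := by congr 1; funext ω; ring
            _ = 0 := exp_phi_zero hmeas hindep hmean hj hj (fun v : (Fin ν → ℝ) × (Fin ν → ℝ) => v.1 l * v.1 l' * v.1 l') (by fun_prop) l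
        · by_cases hjp : j = p
          · subst hjp
            have hi : j ≠ i := fun h => hij h.symm
            calc ∫ ω, (Y i ω l * Y j ω l) * (Y j ω l' * Y j ω l') ∂μ
                = ∫ ω, (fun v : (Fin ν → ℝ) × (Fin ν → ℝ) => v.1 l * v.1 l' * v.1 l')
                    (Y j ω, Y j ω) * Y i ω l ∂μ := by congr 1; funext ω; ring
              _ = 0 := exp_phi_zero hmeas hindep hmean hi hi (fun v : (Fin ν → ℝ) × (Fin ν → ℝ) => v.1 l * v.1 l' * v.1 l') (by fun_prop) l
          · have hji : j ≠ i := fun h => hij h.symm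
            have hpi : p ≠ i := fun h => hip h.symm
            calc ∫ ω, (Y i ω l * Y j ω l) * (Y p ω l' * Y p ω l') ∂μ
                = ∫ ω, (fun v : (Fin ν → ℝ) × (Fin ν → ℝ) => v.1 l * v.2 l' * v.2 l')
                    (Y j ω, Y p ω) * Y i ω l ∂μ := by congr 1; funext ω; ring
              _ = 0 := exp_phi_zero hmeas hindep hmean hji hpi (fun v : (Fin ν → ℝ) × (Fin ν → ℝ) => v.1 l * v.2 l' * v.2 l') (by fun_prop) l
      by_cases hip : i = p
      · have hjp : j ≠ p := fun h => hij (hip.trans h.symm)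
        simp [h0, hij, hjp]
      · simp [h0, hij, hip]
    · by_cases hip : i = p
      · subst hip
        by_cases hjq : j = q
        · subst hjq
          have h1 : ∫ ω, (Y i ω l * Y j ω l) * (Y i ω l' * Y j ω l') ∂μ
              = if l = l' then 1 else 0 := by
            calc ∫ ω, (Y i ω l * Y j ω l) * (Y i ω l' * Y j ω l') ∂μ
                = ∫ ω, (Y i ω l * Y i ω l') * (Y j ω l * Y j ω l') ∂μ := by
                  congr 1; funext ω; ring
              _ = (if l = l' then 1 else 0) * (if l = l' then 1 else 0) := by
                  rw [exp_pair hmeas hindep hij, hcov i l l', hcov j l l']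
              _ = if l = l' then 1 else 0 := by split <;> norm_num
          simp [h1, hij]
        · -- i = p, j ≠ q: isolate j
          have h0 : ∫ ω, (Y i ω l * Y j ω l) * (Y i ω l' * Y q ω l') ∂μ = 0 := by
            have hqj : q ≠ j := fun h => hjq h.symm
            calc ∫ ω, (Y i ω l * Y j ω l) * (Y i ω l' * Y q ω l') ∂μ
                = ∫ ω, (fun v : (Fin ν → ℝ) × (Fin ν → ℝ) => v.1 l * v.1 l' * v.2 l')
                    (Y i ω, Y q ω) * Y j ω l ∂μ := by congr 1; funext ω; ring
              _ = 0 := exp_phi_zero hmeas hindep hmean hij hqj (fun v : (Fin ν → ℝ) × (Fin ν → ℝ) => v.1 l * v.1 l' * v.2 l') (by fun_prop) l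
          simp [h0, hij, hjq, hpq]
      · by_cases hiq : i = q
        · subst hiq
          by_cases hjp : j = p
          · subst hjp
            have h1 : ∫ ω, (Y i ω l * Y j ω l) * (Y j ω l' * Y i ω l') ∂μ
                = if l = l' then 1 else 0 := by
              calc ∫ ω, (Y i ω l * Y j ω l) * (Y j ω l' * Y i ω l') ∂μ
                  = ∫ ω, (Y i ω l * Y i ω l') * (Y j ω l * Y j ω l') ∂μ := by
                    congr 1; funext ω; ring
                _ = (if l = l' then 1 else 0) * (if l = l' then 1 else 0) := by
                    rw [exp_pair hmeas hindep hij, hcov i l l', hcov j l l']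
                _ = if l = l' then 1 else 0 := by split <;> norm_num
            simp [h1, hij, hip]
          · -- i = q, j ≠ p: isolate j
            have h0 : ∫ ω, (Y i ω l * Y j ω l) * (Y p ω l' * Y i ω l') ∂μ = 0 := by
              have hpj : p ≠ j := fun h => hjp h.symm
              calc ∫ ω, (Y i ω l * Y j ω l) * (Y p ω l' * Y i ω l') ∂μ
                  = ∫ ω, (fun v : (Fin ν → ℝ) × (Fin ν → ℝ) => v.1 l * v.1 l' * v.2 l')
                      (Y i ω, Y p ω) * Y j ω l ∂μ := by congr 1; funext ω; ring
                _ = 0 := exp_phi_zero hmeas hindep hmean hij hpj (fun v : (Fin ν → ℝ) × (Fin ν → ℝ) => v.1 l * v.1 l' * v.2 l') (by fun_prop) l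
            simp [h0, hij, hip, hjp]
        · by_cases hjp : j = p
          · subst hjp
            -- j = p, i ∉ {j,q}: isolate i
            have h0 : ∫ ω, (Y i ω l * Y j ω l) * (Y j ω l' * Y q ω l') ∂μ = 0 := by
              have hji : j ≠ i := fun h => hij h.symm
              have hqi : q ≠ i := fun h => hiq h.symm
              calc ∫ ω, (Y i ω l * Y j ω l) * (Y j ω l' * Y q ω l') ∂μ
                  = ∫ ω, (fun v : (Fin ν → ℝ) × (Fin ν → ℝ) => v.1 l * v.1 l' * v.2 l')
                      (Y j ω, Y q ω) * Y i ω l ∂μ := by congr 1; funext ω; ring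
                _ = 0 := exp_phi_zero hmeas hindep hmean hji hqi (fun v : (Fin ν → ℝ) × (Fin ν → ℝ) => v.1 l * v.1 l' * v.2 l') (by fun_prop) l
            simp [h0, hij, hip, hiq]
          · by_cases hjq : j = q
            · subst hjq
              -- j = q, i ∉ {j,p}: isolate i
              have h0 : ∫ ω, (Y i ω l * Y j ω l) * (Y p ω l' * Y j ω l') ∂μ = 0 := by
                have hji : j ≠ i := fun h => hij h.symm
                have hpi : p ≠ i := fun h => hip h.symm
                calc ∫ ω, (Y i ω l * Y j ω l) * (Y p ω l' * Y j ω l') ∂μ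
                    = ∫ ω, (fun v : (Fin ν → ℝ) × (Fin ν → ℝ) => v.1 l * v.1 l' * v.2 l')
                        (Y j ω, Y p ω) * Y i ω l ∂μ := by congr 1; funext ω; ring
                  _ = 0 := exp_phi_zero hmeas hindep hmean hji hpi (fun v : (Fin ν → ℝ) × (Fin ν → ℝ) => v.1 l * v.1 l' * v.2 l') (by fun_prop) l
              simp [h0, hij, hip, hjp]
            · have h0 := exp_four_zero hmeas hindep hmean hip hiq hjp hjq hij l l'
              simp [h0, hij, hip, hiq, hjp, hjq]


lemma expand_sq {m : ℕ} (x : Fin m → ℝ) :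
    (∑ l, x l)^2 = ∑ l, ∑ l', x l * x l' := by
  rw [pow_two, Finset.sum_mul_sum]

lemma expand_four {m : ℕ} (x y : Fin m → ℝ) :
    ((∑ i, x i)^2) * ((∑ i, y i)^2) = ∑ i, ∑ j, ∑ p, ∑ q, (x i * x j) * (y p * y q) := by
  have h1 : (∑ i, x i)^2 = ∑ i, ∑ j, x i * x j := expand_sq x
  have h2 : (∑ i, y i)^2 = ∑ p, ∑ q, y p * y q := expand_sq y
  rw [h1, h2, Finset.sum_mul]
  refine Finset.sum_congr rfl fun i _ => ?_
  rw [Finset.sum_mul]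
  refine Finset.sum_congr rfl fun j _ => ?_
  rw [Finset.mul_sum]
  refine Finset.sum_congr rfl fun p _ => ?_
  rw [Finset.mul_sum]

lemma exp_YY (hmeas : ∀ i, Measurable (Y i))
    (hindep : ProbabilityTheory.iIndepFun Y μ)
    (hmean : ∀ i l, ∫ ω, Y i ω l ∂μ = 0)
    (hcov : ∀ i l l', ∫ ω, Y i ω l * Y i ω l' ∂μ = if l = l' then 1 else 0)
    (i j : Fin n) (l : Fin ν) :
    ∫ ω, Y i ω l * Y j ω l ∂μ = if i = j then (1:ℝ) else 0 := by
  by_cases hij : i = j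
  · subst hij
    rw [hcov i l l]
    simp
  · rw [exp_single_zero hmeas hindep hmean hij l l]
    simp [hij]

end SSV


open SSV ProbabilityTheory

/-- Under the same assumptions (`x₁, …, x_n` i.i.d. uniform on `M`, `Y i = t_{(k)}(x_i)`
with mean `0` and identity covariance `I_{ν_k}`, and finite fourth moments), the variance
of `S_k = (1/n) ∑_l (∑ᵢ Yᵢ(l))²` satisfies
`var(S_k) = (1/n) var(‖t_{(k)}(x)‖²) + 2(1 − 1/n) ν_k`. -/
theorem score_statistic_variance {Ω : Type*} [MeasurableSpace Ω] (μ : Measure Ω)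
    [IsProbabilityMeasure μ] (n ν : ℕ) (hn : 0 < n)
    (Y : Fin n → Ω → Fin ν → ℝ)
    (hmeas : ∀ i, Measurable (Y i))
    (hindep : ProbabilityTheory.iIndepFun Y μ)
    (hident : ∀ i j, ProbabilityTheory.IdentDistrib (Y i) (Y j) μ μ)
    (hmem : ∀ i l, MemLp (fun ω => Y i ω l) 4 μ)
    (hmean : ∀ i l, ∫ ω, Y i ω l ∂μ = 0)
    (hcov : ∀ i l l', ∫ ω, Y i ω l * Y i ω l' ∂μ = if l = l' then 1 else 0) :
    ProbabilityTheory.variance (fun ω => (1 / (n : ℝ)) * ∑ l, (∑ i, Y i ω l) ^ 2) μ =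
      (1 / (n : ℝ)) *
          ProbabilityTheory.variance (fun ω => ∑ l, (Y ⟨0, hn⟩ ω l) ^ 2) μ +
        2 * (1 - 1 / (n : ℝ)) * ν := by
  have hn' : (n:ℝ) ≠ 0 := Nat.cast_ne_zero.mpr hn.ne'
  set i0 : Fin n := ⟨0, hn⟩ with hi0
  -- ℒp facts
  have memsum4 : ∀ l, MemLp (fun ω => ∑ i, Y i ω l) 4 μ :=
    fun l => memLp_finset_sum Finset.univ (fun i _ => hmem i l)
  have memsq : ∀ l, MemLp (fun ω => (∑ i, Y i ω l)^2) 2 μ := by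
    intro l
    have h : MemLp (fun ω => (∑ i, Y i ω l) * (∑ i, Y i ω l)) 2 μ :=
      MemLp.smul (memsum4 l) (memsum4 l) (hpqr := ⟨by simpa only [one_div] using half_eq.symm⟩)
    simpa [pow_two] using h
  have memZ : MemLp (fun ω => ∑ l, (∑ i, Y i ω l)^2) 2 μ :=
    memLp_finset_sum Finset.univ (fun l _ => memsq l)
  have memsqA : ∀ l, MemLp (fun ω => (Y i0 ω l)^2) 2 μ := by
    intro l
    simpa [pow_two] using mem2 hmem i0 i0 l l
  have memA : MemLp (fun ω => ∑ l, (Y i0 ω l)^2) 2 μ :=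
    memLp_finset_sum Finset.univ (fun l _ => memsqA l)
  -- first moments
  have EA : ∫ ω, (∑ l, (Y i0 ω l)^2) ∂μ = (ν:ℝ) := by
    rw [integral_finset_sum _ (fun l _ => (memsqA l).integrable one_le_two)]
    have h1 : ∀ l : Fin ν, ∫ ω, (Y i0 ω l)^2 ∂μ = 1 := by
      intro l
      have := hcov i0 l l
      simpa [pow_two] using this
    simp [h1]
  have intYY : ∀ (i j : Fin n) (l : Fin ν), Integrable (fun ω => Y i ω l * Y j ω l) μ :=
    fun i j l => (mem2 hmem i j l l).integrable one_le_two
  have EZ : ∫ ω, (∑ l, (∑ i, Y i ω l)^2) ∂μ = (n:ℝ) * ν := by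
    have hpt : ∀ ω, (∑ l, (∑ i, Y i ω l)^2) = ∑ l, ∑ i, ∑ j, Y i ω l * Y j ω l :=
      fun ω => Finset.sum_congr rfl fun l _ => expand_sq _
    calc ∫ ω, (∑ l, (∑ i, Y i ω l)^2) ∂μ
        = ∫ ω, ∑ l, ∑ i, ∑ j, Y i ω l * Y j ω l ∂μ := by congr 1; funext ω; exact hpt ω
      _ = ∑ l : Fin ν, ∑ i : Fin n, ∑ j : Fin n, ∫ ω, Y i ω l * Y j ω l ∂μ := by
          rw [integral_finset_sum _ (fun l _ => integrable_finset_sum _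
            (fun i _ => integrable_finset_sum _ (fun j _ => intYY i j l)))]
          refine Finset.sum_congr rfl fun l _ => ?_
          rw [integral_finset_sum _ (fun i _ => integrable_finset_sum _ (fun j _ => intYY i j l))]
          exact Finset.sum_congr rfl fun i _ => integral_finset_sum _ (fun j _ => intYY i j l)
      _ = ∑ l : Fin ν, ∑ i : Fin n, ∑ j : Fin n, (if i = j then (1:ℝ) else 0) :=
          Finset.sum_congr rfl fun l _ => Finset.sum_congr rfl fun i _ =>
            Finset.sum_congr rfl fun j _ => exp_YY hmeas hindep hmean hcov i j l
      _ = (n:ℝ) * ν := by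
          simp [Finset.sum_ite_eq, Finset.sum_const, Finset.card_univ, mul_comm]
  -- second moment of Z
  have I0 : ∀ (i j p q : Fin n) (l l' : Fin ν),
      Integrable (fun ω => (Y i ω l * Y j ω l) * (Y p ω l' * Y q ω l')) μ :=
    fun i j p q l l' => int4 hmem i j p q l l l' l'
  have intprod : ∀ l l' : Fin ν, Integrable (fun ω => (Y i0 ω l)^2 * (Y i0 ω l')^2) μ := by
    intro l l'
    simpa [pow_two] using I0 i0 i0 i0 i0 l l'
  have m4sum : (∑ l : Fin ν, ∑ l' : Fin ν, ∫ ω, (Y i0 ω l)^2 * (Y i0 ω l')^2 ∂μ)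
      = ∫ ω, (∑ l, (Y i0 ω l)^2)^2 ∂μ := by
    have hpt : ∀ ω, (∑ l, (Y i0 ω l)^2)^2 = ∑ l, ∑ l', (Y i0 ω l)^2 * (Y i0 ω l')^2 :=
      fun ω => expand_sq _
    calc ∑ l : Fin ν, ∑ l' : Fin ν, ∫ ω, (Y i0 ω l)^2 * (Y i0 ω l')^2 ∂μ
        = ∫ ω, ∑ l, ∑ l', (Y i0 ω l)^2 * (Y i0 ω l')^2 ∂μ := by
          rw [integral_finset_sum _ (fun l _ => integrable_finset_sum _ (fun l' _ => intprod l l'))]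
          exact (Finset.sum_congr rfl fun l _ =>
            (integral_finset_sum _ (fun l' _ => intprod l l')).symm)
      _ = ∫ ω, (∑ l, (Y i0 ω l)^2)^2 ∂μ := by congr 1; funext ω; exact (hpt ω).symm
  have EZ2' : ∫ ω, (∑ l, (∑ i, Y i ω l)^2)^2 ∂μ
      = ∑ l : Fin ν, ∑ l' : Fin ν, ∑ i : Fin n, ∑ j : Fin n, ∑ p : Fin n, ∑ q : Fin n,
          ∫ ω, (Y i ω l * Y j ω l) * (Y p ω l' * Y q ω l') ∂μ := by
    have hpt : ∀ ω, (∑ l, (∑ i, Y i ω l)^2)^2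
        = ∑ l, ∑ l', ∑ i, ∑ j, ∑ p, ∑ q, (Y i ω l * Y j ω l) * (Y p ω l' * Y q ω l') := by
      intro ω
      rw [expand_sq (fun l => (∑ i, Y i ω l)^2)]
      exact Finset.sum_congr rfl fun l _ => Finset.sum_congr rfl fun l' _ =>
        expand_four (fun i => Y i ω l) (fun i => Y i ω l')
    calc ∫ ω, (∑ l, (∑ i, Y i ω l)^2)^2 ∂μ
        = ∫ ω, ∑ l, ∑ l', ∑ i, ∑ j, ∑ p, ∑ q,
            (Y i ω l * Y j ω l) * (Y p ω l' * Y q ω l') ∂μ := by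
          congr 1; funext ω; exact hpt ω
      _ = _ := by
          rw [integral_finset_sum _ (fun l _ => integrable_finset_sum _ (fun l' _ =>
            integrable_finset_sum _ (fun i _ => integrable_finset_sum _ (fun j _ =>
            integrable_finset_sum _ (fun p _ => integrable_finset_sum _ (fun q _ =>
            I0 i j p q l l'))))))]
          refine Finset.sum_congr rfl fun l _ => ?_
          rw [integral_finset_sum _ (fun l' _ =>
            integrable_finset_sum _ (fun i _ => integrable_finset_sum _ (fun j _ =>
            integrable_finset_sum _ (fun p _ => integrable_finset_sum _ (fun q _ =>
            I0 i j p q l l')))))]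
          refine Finset.sum_congr rfl fun l' _ => ?_
          rw [integral_finset_sum _ (fun i _ => integrable_finset_sum _ (fun j _ =>
            integrable_finset_sum _ (fun p _ => integrable_finset_sum _ (fun q _ =>
            I0 i j p q l l'))))]
          refine Finset.sum_congr rfl fun i _ => ?_
          rw [integral_finset_sum _ (fun j _ =>
            integrable_finset_sum _ (fun p _ => integrable_finset_sum _ (fun q _ =>
            I0 i j p q l l')))]
          refine Finset.sum_congr rfl fun j _ => ?_
          rw [integral_finset_sum _ (fun p _ => integrable_finset_sum _ (fun q _ =>
            I0 i j p q l l'))]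
          refine Finset.sum_congr rfl fun p _ => ?_
          exact integral_finset_sum _ (fun q _ => I0 i j p q l l')
  have inner_eq : ∀ l l' : Fin ν,
      (∑ i : Fin n, ∑ j : Fin n, ∑ p : Fin n, ∑ q : Fin n,
        ∫ ω, (Y i ω l * Y j ω l) * (Y p ω l' * Y q ω l') ∂μ)
      = (n:ℝ) * (∫ ω, (Y i0 ω l)^2 * (Y i0 ω l')^2 ∂μ)
        + ((n:ℝ) * ((n:ℝ) - 1)) * 1
        + 2 * ((n:ℝ) * ((n:ℝ) - 1)) * (if l = l' then (1:ℝ) else 0) := by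
    intro l l'
    rw [← count_sum n (∫ ω, (Y i0 ω l)^2 * (Y i0 ω l')^2 ∂μ) 1 (if l = l' then (1:ℝ) else 0)]
    refine Finset.sum_congr rfl fun i _ => Finset.sum_congr rfl fun j _ =>
      Finset.sum_congr rfl fun p _ => Finset.sum_congr rfl fun q _ => ?_
    rw [key_exp hmeas hindep hident hmean hcov i0 i j p q l l']
    ring
  have EZ2 : ∫ ω, (∑ l, (∑ i, Y i ω l)^2)^2 ∂μ
      = (n:ℝ) * (∫ ω, (∑ l, (Y i0 ω l)^2)^2 ∂μ)
        + ((n:ℝ) * ((n:ℝ) - 1)) * (ν:ℝ)^2 + 2 * ((n:ℝ) * ((n:ℝ) - 1)) * ν := by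
    rw [EZ2']
    calc ∑ l : Fin ν, ∑ l' : Fin ν, ∑ i : Fin n, ∑ j : Fin n, ∑ p : Fin n, ∑ q : Fin n,
          ∫ ω, (Y i ω l * Y j ω l) * (Y p ω l' * Y q ω l') ∂μ
        = ∑ l : Fin ν, ∑ l' : Fin ν,
            ((n:ℝ) * (∫ ω, (Y i0 ω l)^2 * (Y i0 ω l')^2 ∂μ)
              + ((n:ℝ) * ((n:ℝ) - 1)) * 1
              + 2 * ((n:ℝ) * ((n:ℝ) - 1)) * (if l = l' then (1:ℝ) else 0)) :=
          Finset.sum_congr rfl fun l _ => Finset.sum_congr rfl fun l' _ => inner_eq l l'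
      _ = _ := by
          rw [← m4sum]
          simp only [Finset.sum_add_distrib, ← Finset.mul_sum, Finset.sum_const,
            Finset.card_univ, Fintype.card_fin, nsmul_eq_mul, mul_one, mul_ite, mul_zero,
            Finset.sum_ite_eq, Finset.mem_univ, if_true]
          ring
  -- variances
  have VarA : ProbabilityTheory.variance (fun ω => ∑ l, (Y i0 ω l)^2) μ
      = (∫ ω, (∑ l, (Y i0 ω l)^2)^2 ∂μ) - (ν:ℝ)^2 := by
    rw [ProbabilityTheory.variance_eq_sub memA]
    simp only [Pi.pow_apply]
    rw [EA]
  have VarZ : ProbabilityTheory.variance (fun ω => ∑ l, (∑ i, Y i ω l)^2) μ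
      = (n:ℝ) * (∫ ω, (∑ l, (Y i0 ω l)^2)^2 ∂μ)
        + ((n:ℝ) * ((n:ℝ) - 1)) * (ν:ℝ)^2 + 2 * ((n:ℝ) * ((n:ℝ) - 1)) * ν
        - ((n:ℝ) * ν)^2 := by
    rw [ProbabilityTheory.variance_eq_sub memZ]
    simp only [Pi.pow_apply]
    rw [EZ, EZ2]
  rw [ProbabilityTheory.variance_const_mul, VarZ, VarA]
  field_simp
  ring
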